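/- Let (M²,g) be a Riemannian surface and T a symmetric (1,1)-tensor field with div T = 0. Then the following are equivalent: (i) T is a Codazzi tensor field; (ii) grad t = 2 div T (equivalently grad t = 0 given div T = 0); (iii) trace T is constant. -/
import Mathlib


/-- Abstract model of the `C^∞(M)`-module of (local) vector fields on an
`m`-dimensional Riemannian manifold, equipped with an orthonormal frame `E`,
the Levi-Civita connection `D`, and the derivation action `act` of vector
fields on smooth functions `F`. -/
structure RiemannianFrame (m : ℕ) where
  F : Type
  V : Type
  [instCommRing : CommRing F]
  [instAlgebra : Algebra ℝ F]
  [instAddCommGroup : AddCommGroup V]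
  [instModule : Module F V]
  g : V → V → F
  D : V → V → V
  act : V → F → F
  bracket : V → V → V
  E : Fin m → V
  g_symm : ∀ X Y, g X Y = g Y X
  g_addl : ∀ X Y Z, g (X + Y) Z = g X Z + g Y Z
  g_smull : ∀ (f : F) (X Y : V), g (f • X) Y = f * g X Y
  act_addf : ∀ (X : V) (f h : F), act X (f + h) = act X f + act X h
  act_mulf : ∀ (X : V) (f h : F), act X (f * h) = act X f * h + f * act X h
  act_addX : ∀ (X Y : V) (f : F), act (X + Y) f = act X f + act Y f
  act_smulX : ∀ (f : F) (X : V) (h : F), act (f • X) h = f * act X h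
  act_const : ∀ (X : V) (r : ℝ), act X (algebraMap ℝ F r) = 0
  D_addX : ∀ X Y Z, D (X + Y) Z = D X Z + D Y Z
  D_smulX : ∀ (f : F) (X Y : V), D (f • X) Y = f • D X Y
  D_addY : ∀ X Y Z, D X (Y + Z) = D X Y + D X Z
  D_leibniz : ∀ (X : V) (f : F) (Y : V), D X (f • Y) = act X f • Y + f • D X Y
  metric_compat : ∀ X Y Z, act X (g Y Z) = g (D X Y) Z + g Y (D X Z)
  torsion_free : ∀ X Y, D X Y - D Y X = bracket X Y
  bracket_act : ∀ (X Y : V) (f : F),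
    act (bracket X Y) f = act X (act Y f) - act Y (act X f)
  frame_orthonormal : ∀ i j, g (E i) (E j) = if i = j then 1 else 0
  frame_span : ∀ X, X = ∑ i, g X (E i) • E i

attribute [instance] RiemannianFrame.instCommRing RiemannianFrame.instAlgebra
  RiemannianFrame.instAddCommGroup RiemannianFrame.instModule

namespace RiemannianFrame

variable {m : ℕ} (R : RiemannianFrame m)

/-- The covariant derivative `(∇_X T)(Y)` of a `(1,1)`-tensor field `T`. -/
def covT (T : R.V → R.V) (X Y : R.V) : R.V := R.D X (T Y) - T (R.D X Y)

/-- `T` is a `(1,1)`-tensor field: it is `C^∞(M)`-linear. -/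
def IsTensor (T : R.V → R.V) : Prop :=
  (∀ X Y, T (X + Y) = T X + T Y) ∧ ∀ (f : R.F) (X : R.V), T (f • X) = f • T X

/-- `T` is symmetric with respect to the metric. -/
def IsSymmT (T : R.V → R.V) : Prop := ∀ X Y, R.g (T X) Y = R.g X (T Y)

/-- `T` is a Codazzi tensor field: `(∇_X T)(Y) = (∇_Y T)(X)`. -/
def IsCodazzi (T : R.V → R.V) : Prop := ∀ X Y, R.covT T X Y = R.covT T Y X

/-- The trace of a `(1,1)`-tensor field. -/
def traceT (T : R.V → R.V) : R.F := ∑ i, R.g (T (R.E i)) (R.E i)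

/-- The divergence of a `(1,1)`-tensor field, `div T = Σᵢ (∇_{Eᵢ}T)(Eᵢ)`. -/
def divT (T : R.V → R.V) : R.V := ∑ i, R.covT T (R.E i) (R.E i)

/-- The gradient of a function. -/
def gradF (f : R.F) : R.V := ∑ i, R.act (R.E i) f • R.E i

/-- The divergence of a vector field. -/
def divV (Z : R.V) : R.F := ∑ i, R.g (R.D (R.E i) Z) (R.E i)

/-- The geometric Laplacian `Δ f = -div(grad f)`
(sign convention matching `Δ^R T = -trace ∇²T`). -/
def lapF (f : R.F) : R.F := - R.divV (R.gradF f)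

/-- The pointwise inner product `⟨T,S⟩` of two `(1,1)`-tensor fields. -/
def innerTT (T S : R.V → R.V) : R.F :=
  ∑ i, ∑ j, R.g (T (R.E i)) (R.E j) * R.g (S (R.E i)) (R.E j)

/-- The pointwise squared norm `|T|²`. -/
def normT2 (T : R.V → R.V) : R.F := R.innerTT T T

/-- The pointwise inner product `⟨∇T, ∇S⟩` of the `(0,3)`-tensors `∇T`, `∇S`. -/
def innerNabla (T S : R.V → R.V) : R.F :=
  ∑ i, R.innerTT (fun Y => R.covT T (R.E i) Y) (fun Y => R.covT S (R.E i) Y)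

/-- The pointwise squared norm `|∇T|²`. -/
def normNabla2 (T : R.V → R.V) : R.F := R.innerNabla T T

/-- The second covariant derivative `(∇²T)(X,Y,Z) = (∇_X (∇T))(Y,Z)`. -/
def nabla2 (T : R.V → R.V) (X Y Z : R.V) : R.V :=
  R.D X (R.covT T Y Z) - R.covT T (R.D X Y) Z - R.covT T Y (R.D X Z)

/-- `trace(∇²T)`, as a `(1,1)`-tensor field. -/
def traceNabla2 (T : R.V → R.V) (X : R.V) : R.V := ∑ i, R.nabla2 T (R.E i) (R.E i) X

/-- The rough Laplacian `Δ^R T = -trace ∇²T`. -/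
def roughLap (T : R.V → R.V) (X : R.V) : R.V := - R.traceNabla2 T X

/-- The curvature tensor `R(X,Y)Z = ∇_X∇_Y Z - ∇_Y∇_X Z - ∇_{[X,Y]}Z`. -/
def curv (X Y Z : R.V) : R.V :=
  R.D X (R.D Y Z) - R.D Y (R.D X Z) - R.D (R.bracket X Y) Z

/-- A function is constant iff all its directional derivatives vanish
(`M` is assumed connected). -/
def IsConst (f : R.F) : Prop := ∀ X, R.act X f = 0

end RiemannianFrame

/-- The Gaussian curvature of a surface, `K = ⟨R(E₁,E₂)E₁, E₂⟩`. -/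
def RiemannianFrame.K (R : RiemannianFrame 2) : R.F :=
  R.g (R.curv (R.E 0) (R.E 1) (R.E 0)) (R.E 1)


namespace RiemannianFrame

variable {m : ℕ} (R : RiemannianFrame m)

/-- `g · Z` as an additive hom. -/
def gL (Z : R.V) : R.V →+ R.F := AddMonoidHom.mk' (fun X => R.g X Z) (fun a b => R.g_addl a b Z)

lemma g_addr (X Y Z : R.V) : R.g X (Y + Z) = R.g X Y + R.g X Z := by
  rw [R.g_symm, R.g_addl, R.g_symm Y X, R.g_symm Z X]

/-- `g X ·` as an additive hom. -/
def gR (X : R.V) : R.V →+ R.F := AddMonoidHom.mk' (fun Z => R.g X Z) (fun a b => R.g_addr X a b)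

lemma g_smulr (X : R.V) (f : R.F) (Y : R.V) : R.g X (f • Y) = f * R.g X Y := by
  rw [R.g_symm, R.g_smull, R.g_symm]

lemma g_subl (X Y Z : R.V) : R.g (X - Y) Z = R.g X Z - R.g Y Z := (R.gL Z).map_sub X Y

lemma g_subr (X Y Z : R.V) : R.g X (Y - Z) = R.g X Y - R.g X Z := (R.gR X).map_sub Y Z

lemma g_zerol (Z : R.V) : R.g 0 Z = 0 := (R.gL Z).map_zero

lemma g_zeror (X : R.V) : R.g X 0 = 0 := (R.gR X).map_zero

/-- `act X ·` as an additive hom. -/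
def actH (X : R.V) : R.F →+ R.F := AddMonoidHom.mk' (R.act X) (R.act_addf X)

lemma act_orth (X : R.V) (i j : Fin m) : R.act X (R.g (R.E i) (R.E j)) = 0 := by
  rw [R.frame_orthonormal]
  split_ifs
  · simpa using R.act_const X 1
  · simpa using R.act_const X 0

lemma conn_antisym (X : R.V) (i j : Fin m) :
    R.g (R.D X (R.E i)) (R.E j) = - R.g (R.E i) (R.D X (R.E j)) := by
  have h := R.metric_compat X (R.E i) (R.E j)
  rw [R.act_orth] at h
  linear_combination -h

lemma half_eq_zero {f : R.F} (h : f + f = 0) : f = 0 := by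
  have h2 : algebraMap ℝ R.F 2 * f = 0 := by
    rw [show (2:ℝ) = 1 + 1 by norm_num, map_add, map_one]
    linear_combination h
  calc f = algebraMap ℝ R.F 2⁻¹ * (algebraMap ℝ R.F 2 * f) := by
        rw [← mul_assoc, ← map_mul]; norm_num
    _ = 0 := by rw [h2, mul_zero]

lemma g_sumr {ι : Type*} (X : R.V) (s : Finset ι) (f : ι → R.V) :
    R.g X (∑ i ∈ s, f i) = ∑ i ∈ s, R.g X (f i) := map_sum (R.gR X) f s

lemma g_suml {ι : Type*} (Z : R.V) (s : Finset ι) (f : ι → R.V) :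
    R.g (∑ i ∈ s, f i) Z = ∑ i ∈ s, R.g (f i) Z := map_sum (R.gL Z) f s

lemma act_sum {ι : Type*} (X : R.V) (s : Finset ι) (f : ι → R.F) :
    R.act X (∑ i ∈ s, f i) = ∑ i ∈ s, R.act X (f i) := map_sum (R.actH X) f s

lemma T_sum {ι : Type*} {T : R.V → R.V} (hT : R.IsTensor T) (s : Finset ι) (f : ι → R.V) :
    T (∑ i ∈ s, f i) = ∑ i ∈ s, T (f i) := map_sum (AddMonoidHom.mk' T hT.1) f s

lemma covT_symm {T : R.V → R.V} (hTsymm : R.IsSymmT T) (X Y Z : R.V) :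
    R.g (R.covT T X Y) Z = R.g Y (R.covT T X Z) := by
  unfold covT
  rw [R.g_subl, R.g_subr]
  have h1 := R.metric_compat X (T Y) Z
  have h2 := R.metric_compat X Y (T Z)
  have hu := congrArg (R.act X) (hTsymm Y Z)
  have h4 := hTsymm Y (R.D X Z)
  have h5 := hTsymm (R.D X Y) Z
  show R.g (R.D X (T Y)) Z - R.g (T (R.D X Y)) Z
      = R.g Y (R.D X (T Z)) - R.g Y (T (R.D X Z))
  linear_combination -h1 + h2 - h4 + hu - h5

lemma act_traceT {T : R.V → R.V} (hT : R.IsTensor T) (hTsymm : R.IsSymmT T) (X : R.V) :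
    R.act X (R.traceT T) = ∑ i, R.g (R.covT T X (R.E i)) (R.E i) := by
  classical
  set c : Fin m → Fin m → R.F := fun i j => R.g (R.D X (R.E i)) (R.E j) with hc
  have hterm : ∀ i, R.g (T (R.E i)) (R.D X (R.E i)) + R.g (T (R.D X (R.E i))) (R.E i)
      = ∑ j, c i j * (R.g (T (R.E i)) (R.E j) + R.g (T (R.E j)) (R.E i)) := by
    intro i
    conv_lhs => rw [R.frame_span (R.D X (R.E i))]
    rw [R.g_sumr, R.T_sum hT, R.g_suml]
    simp only [R.g_smulr, hT.2, R.g_smull]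
    rw [← Finset.sum_add_distrib]
    exact Finset.sum_congr rfl fun j _ => by ring
  have habs : ∑ i, (R.g (T (R.E i)) (R.D X (R.E i)) + R.g (T (R.D X (R.E i))) (R.E i)) = 0 := by
    rw [Finset.sum_congr rfl fun i _ => hterm i]
    apply R.half_eq_zero
    have hcanti : ∀ i j, c i j = - c j i := by
      intro i j; rw [hc]; simp only
      rw [R.conn_antisym, R.g_symm]
    have hssym : ∀ i j, R.g (T (R.E i)) (R.E j) = R.g (T (R.E j)) (R.E i) := by
      intro i j; rw [hTsymm, R.g_symm]
    have hswap : ∑ i, ∑ j, c i j * (R.g (T (R.E i)) (R.E j) + R.g (T (R.E j)) (R.E i))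
        = ∑ i, ∑ j, c j i * (R.g (T (R.E j)) (R.E i) + R.g (T (R.E i)) (R.E j)) :=
      Finset.sum_comm
    nth_rewrite 2 [hswap]
    rw [← Finset.sum_add_distrib]
    rw [Finset.sum_congr rfl fun i _ => (Finset.sum_add_distrib).symm]
    apply Finset.sum_eq_zero; intro i _
    apply Finset.sum_eq_zero; intro j _
    have := hcanti i j
    have := hssym i j
    linear_combination (R.g (T (R.E i)) (R.E j) + R.g (T (R.E j)) (R.E i)) * (hcanti i j)
  have hL : R.act X (R.traceT T)
      = ∑ i, (R.g (R.D X (T (R.E i))) (R.E i) + R.g (T (R.E i)) (R.D X (R.E i))) := by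
    unfold traceT
    rw [R.act_sum]
    exact Finset.sum_congr rfl fun i _ => R.metric_compat X (T (R.E i)) (R.E i)
  have hR : ∑ i, R.g (R.covT T X (R.E i)) (R.E i)
      = ∑ i, (R.g (R.D X (T (R.E i))) (R.E i) - R.g (T (R.D X (R.E i))) (R.E i)) := by
    exact Finset.sum_congr rfl fun i _ => R.g_subl _ _ _
  rw [hL, hR, Finset.sum_sub_distrib]
  rw [Finset.sum_add_distrib] at habs ⊢
  linear_combination habs

end RiemannianFrame

/-- On a surface, for a symmetric `(1,1)`-tensor field `T` with
`div T = 0`, the following are equivalent: (i) `T` is Codazzi;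
(ii) `grad t = 2 div T` (the real form of holomorphicity of
`⟨T(∂_z),∂_z⟩`); (iii) `t = trace T` is constant. -/
theorem stmt7 (R : RiemannianFrame 2) (T : R.V → R.V)
    (hT : R.IsTensor T) (hTsymm : R.IsSymmT T)
    (hdiv : R.divT T = 0) :
    [R.IsCodazzi T,
     R.gradF (R.traceT T) = (2 : R.F) • R.divT T,
     R.IsConst (R.traceT T)].TFAE := by
  tfae_have 1 → 3 := by
    intro hC X
    rw [R.act_traceT hT hTsymm]
    have h1 : ∀ i, R.g (R.covT T X (R.E i)) (R.E i) = R.g X (R.covT T (R.E i) (R.E i)) := by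
      intro i
      rw [hC X (R.E i)]
      exact R.covT_symm hTsymm (R.E i) X (R.E i)
    rw [Finset.sum_congr rfl fun i _ => h1 i, ← R.g_sumr]
    show R.g X (R.divT T) = 0
    rw [hdiv, R.g_zeror]
  tfae_have 3 → 2 := by
    intro h3
    rw [hdiv, smul_zero]
    unfold RiemannianFrame.gradF
    rw [Finset.sum_congr rfl fun i _ => by rw [h3 (R.E i), zero_smul]]
    exact Finset.sum_const_zero
  tfae_have 2 → 1 := by
    intro h2
    have hconst : ∀ j, R.act (R.E j) (R.traceT T) = 0 := by
      intro j
      have h0 : R.gradF (R.traceT T) = 0 := by rw [h2, hdiv, smul_zero]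
      have hg := congrArg (fun v => R.g v (R.E j)) h0
      simp only [RiemannianFrame.gradF] at hg
      rw [R.g_suml, R.g_zerol] at hg
      simp only [R.g_smull, R.frame_orthonormal, mul_ite, mul_one, mul_zero,
        Finset.sum_ite_eq', Finset.mem_univ, if_true] at hg
      exact hg
    set A : Fin 2 → Fin 2 → Fin 2 → R.F :=
      fun k i c => R.g (R.covT T (R.E k) (R.E i)) (R.E c) with hA
    have hAsym : ∀ k i c, A k i c = A k c i := by
      intro k i c
      simp only [hA]
      rw [R.covT_symm hTsymm, R.g_symm]
    have htr : ∀ k : Fin 2, A k 0 0 + A k 1 1 = 0 := by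
      intro k
      have hk := hconst k
      rw [R.act_traceT hT hTsymm, Fin.sum_univ_two] at hk
      exact hk
    have hdv : ∀ c : Fin 2, A 0 0 c + A 1 1 c = 0 := by
      intro c
      have hc : R.g (R.divT T) (R.E c) = 0 := by rw [hdiv, R.g_zerol]
      unfold RiemannianFrame.divT at hc
      rw [R.g_suml, Fin.sum_univ_two] at hc
      exact hc
    have hcomp2 : ∀ a b c : Fin 2, A a b c = A b a c := by
      intro a b c
      fin_cases a <;> fin_cases b <;> fin_cases c <;>
        simp only [Fin.mk_zero, Fin.mk_one, Fin.isValue]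
      · linear_combination hAsym 0 1 0 + hdv 1 - htr 1
      · linear_combination htr 0 - hdv 0 - hAsym 1 0 1
      · linear_combination -(hAsym 0 1 0 + hdv 1 - htr 1)
      · linear_combination -(htr 0 - hdv 0 - hAsym 1 0 1)
    have hframe : ∀ a b : Fin 2, R.covT T (R.E a) (R.E b) = R.covT T (R.E b) (R.E a) := by
      intro a b
      have h0 : ∀ c, R.g (R.covT T (R.E a) (R.E b) - R.covT T (R.E b) (R.E a)) (R.E c) = 0 := by
        intro c
        rw [R.g_subl, sub_eq_zero]
        exact hcomp2 a b c
      have hsp := R.frame_span (R.covT T (R.E a) (R.E b) - R.covT T (R.E b) (R.E a))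
      rw [Finset.sum_congr rfl fun c _ => by rw [h0 c, zero_smul]] at hsp
      rw [Finset.sum_const_zero] at hsp
      exact sub_eq_zero.mp hsp
    have hXadd : ∀ X X' Y, R.covT T (X + X') Y = R.covT T X Y + R.covT T X' Y := by
      intro X X' Y; unfold RiemannianFrame.covT; rw [R.D_addX, R.D_addX, hT.1]; abel
    have hXsmul : ∀ (f : R.F) (X Y : R.V), R.covT T (f • X) Y = f • R.covT T X Y := by
      intro f X Y; unfold RiemannianFrame.covT; rw [R.D_smulX, R.D_smulX, hT.2, smul_sub]
    have hYadd : ∀ X Y Z, R.covT T X (Y + Z) = R.covT T X Y + R.covT T X Z := by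
      intro X Y Z; unfold RiemannianFrame.covT; rw [hT.1, R.D_addY, R.D_addY, hT.1]; abel
    have hYsmul : ∀ (X : R.V) (f : R.F) (Y : R.V), R.covT T X (f • Y) = f • R.covT T X Y := by
      intro X f Y; unfold RiemannianFrame.covT
      rw [hT.2, R.D_leibniz, R.D_leibniz, hT.1, hT.2, hT.2, smul_sub]; abel
    have covT_sumX : ∀ {ι : Type} (s : Finset ι) (V : ι → R.V) (Y : R.V),
        R.covT T (∑ i ∈ s, V i) Y = ∑ i ∈ s, R.covT T (V i) Y := by
      intro ι s V Y
      exact map_sum (AddMonoidHom.mk' (fun Z => R.covT T Z Y) (fun p q => hXadd p q Y)) V s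
    have covT_sumY : ∀ (X : R.V) {ι : Type} (s : Finset ι) (V : ι → R.V),
        R.covT T X (∑ i ∈ s, V i) = ∑ i ∈ s, R.covT T X (V i) := by
      intro X ι s V
      exact map_sum (AddMonoidHom.mk' (fun Z => R.covT T X Z) (fun p q => hYadd X p q)) V s
    have expand : ∀ U W : R.V, R.covT T U W
        = ∑ a, ∑ b, R.g U (R.E a) • R.g W (R.E b) • R.covT T (R.E a) (R.E b) := by
      intro U W
      conv_lhs => rw [R.frame_span U, R.frame_span W]
      rw [covT_sumX]
      refine Finset.sum_congr rfl fun a _ => ?_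
      rw [hXsmul, covT_sumY, Finset.smul_sum]
      refine Finset.sum_congr rfl fun b _ => ?_
      rw [hYsmul]
    intro X Y
    rw [expand X Y, expand Y X, Finset.sum_comm]
    refine Finset.sum_congr rfl fun a _ => Finset.sum_congr rfl fun b _ => ?_
    rw [hframe b a, smul_comm]
  tfae_finish
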